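/- Let δ ∈ ℝ with δ ≠ 1. Define q : ℕ → ℝ by q(j) = (1/(1−δ))·(−δ/(1−δ))^j, and define p : ℕ → ℝ by p(0) = 1−δ, p(1) = δ, and p(i) = 0 for all i ≥ 2. Then for every ℓ ∈ ℕ, the convolution Σ_{j=0}^{ℓ} q(j)·p(ℓ−j) equals 1 if ℓ = 0 and equals 0 if ℓ ≥ 1. -/

import Mathlib

theorem stmt7 (δ : ℝ) (hδ : δ ≠ 1) (q p : ℕ → ℝ)
    (hq : ∀ j : ℕ, q j = (1 / (1 - δ)) * (-δ / (1 - δ)) ^ j)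
    (hp0 : p 0 = 1 - δ) (hp1 : p 1 = δ) (hp : ∀ i : ℕ, 2 ≤ i → p i = 0) (ℓ : ℕ) :
    ∑ j ∈ Finset.range (ℓ + 1), q j * p (ℓ - j) = if ℓ = 0 then 1 else 0 := by
  have h1 : (1 : ℝ) - δ ≠ 0 := sub_ne_zero.mpr (Ne.symm hδ)
  match ℓ with
  | 0 =>
    simp [hq, hp0]
    field_simp
  | n + 1 =>
    rw [Finset.sum_range_succ, Finset.sum_range_succ]
    have hz : ∑ j ∈ Finset.range n, q j * p (n + 1 - j) = 0 := by
      apply Finset.sum_eq_zero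
      intro j hj
      have hj' := Finset.mem_range.mp hj
      rw [hp (n + 1 - j) (by omega)]
      ring
    rw [hz]
    have e1 : n + 1 - n = 1 := by omega
    rw [Nat.sub_self, e1, hp0, hp1, hq, hq]
    rw [pow_succ]
    rw [if_neg (by omega : n + 1 ≠ 0)]
    field_simp
    ring
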